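/- Let n ≥ 2 be an integer, and let a_+ denote the unique real root of t^{2n+2} + n·t^{2n+1} = 1 lying in (0,1) and a_- the unique real root lying in (−n−1, −n) (these exist for n ≥ 2). Set g(t) = (n+1)·t^n + t^{n+1} + t^{−(n+1)}. Then for every complex root α of t^{2n+2} + n·t^{2n+1} = 1 with α ≠ a_+ and α ≠ a_-, one has |g(α)| < g(a_+); moreover g(a_+) < 2n+3. -/

import Mathlib

lemma lem_key (n : ℕ) (hn : 2 ≤ n) (x c : ℝ) (hx : 1 < x) (hxc : x ^ (2*n+1) ≤ c) :
    c + x ^ (2*n+1) < (c+1) * x ^ (n+1) := by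
  have hx0 : (0:ℝ) < x := lt_trans one_pos hx
  have hx1 : (1:ℝ) < x ^ (2*n+1) := one_lt_pow₀ hx (by omega)
  have hc : 1 < c := lt_of_lt_of_le hx1 hxc
  set S1 := ∑ i ∈ Finset.range n, x ^ i with hS1
  set S2 := ∑ i ∈ Finset.range (n+1), x ^ i with hS2
  have key1 : x ^ (n+1) * S1 < c * S2 := by
    have h1 : x ^ (n+1) * S1 = ∑ i ∈ Finset.range n, x ^ (n+1+i) := by
      rw [hS1, Finset.mul_sum]
      exact Finset.sum_congr rfl fun i _ => by rw [← pow_add]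
    have h2 : ∑ i ∈ Finset.range n, x ^ (n+1+i) ≤ ∑ i ∈ Finset.range n, x ^ (2*n) := by
      apply Finset.sum_le_sum
      intro i hi
      exact pow_le_pow_right₀ (le_of_lt hx) (by simp at hi; omega)
    have h3 : ∑ i ∈ Finset.range n, x ^ (2*n) = (n:ℝ) * x ^ (2*n) := by
      rw [Finset.sum_const, Finset.card_range, nsmul_eq_mul]
    have h4 : x ^ (2*n) < c := by
      have : x ^ (2*n) < x ^ (2*n+1) := pow_lt_pow_right₀ hx (by omega)
      linarith
    have h5 : (n:ℝ) * x ^ (2*n) < (n:ℝ) * c := by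
      apply mul_lt_mul_of_pos_left h4
      exact_mod_cast (by omega : 0 < n)
    have h6 : ((n:ℝ)+1) * c ≤ c * S2 := by
      rw [mul_comm]
      apply mul_le_mul_of_nonneg_left _ (by linarith)
      have heq : ((n:ℝ)+1) = ∑ i ∈ Finset.range (n+1), (1:ℝ) := by
        rw [Finset.sum_const, Finset.card_range, nsmul_eq_mul]; push_cast; ring
      rw [heq, hS2]
      exact Finset.sum_le_sum fun i _ => one_le_pow₀ (le_of_lt hx)
    calc x ^ (n+1) * S1 ≤ (n:ℝ) * x ^ (2*n) := by rw [h1]; linarith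
      _ < (n:ℝ) * c := h5
      _ < ((n:ℝ)+1) * c := by linarith
      _ ≤ c * S2 := h6
  have key2 : x ^ (n+1) * (x ^ n - 1) < c * (x ^ (n+1) - 1) := by
    have hg1 : S1 * (x - 1) = x ^ n - 1 := geom_sum_mul x n
    have hg2 : S2 * (x - 1) = x ^ (n+1) - 1 := geom_sum_mul x (n+1)
    have := mul_lt_mul_of_pos_right key1 (by linarith : (0:ℝ) < x - 1)
    calc x ^ (n+1) * (x ^ n - 1) = x ^ (n+1) * S1 * (x - 1) := by rw [← hg1]; ring
      _ < c * S2 * (x-1) := this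
      _ = c * (x ^ (n+1) - 1) := by rw [mul_assoc, hg2]
  have hxx : x ^ (n+1) * x ^ n = x ^ (2*n+1) := by rw [← pow_add]; congr 1; omega
  nlinarith [key2, hxx]

lemma lem_B (n : ℕ) (hn : 2 ≤ n) :
    (2*(n:ℝ)+1) * ((n:ℝ)+1/4) ^ (2*n) < (((n:ℝ)-1/4) * n) ^ (2*n+1) := by
  have hn2 : (2:ℝ) ≤ (n:ℝ) := by exact_mod_cast hn
  have h1 : ((n:ℝ)-1/4)^2 ≥ (5/4) * ((n:ℝ)+1/4) := by nlinarith
  have h2 : (((n:ℝ)-1/4) * n) ^ (2*n+1) ≥ (((n:ℝ)-1/4)^2) ^ (2*n+1) := by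
    apply pow_le_pow_left₀ (by positivity) (by nlinarith)
  have h3 : (((n:ℝ)-1/4)^2) ^ (2*n+1) ≥ ((5/4) * ((n:ℝ)+1/4)) ^ (2*n+1) := by
    apply pow_le_pow_left₀ (by positivity) h1
  have h4 : ((5/4:ℝ) * ((n:ℝ)+1/4)) ^ (2*n+1) = (5/4:ℝ)^(2*n+1) * ((n:ℝ)+1/4)^(2*n+1) := by
    rw [mul_pow]
  have h5 : (3:ℝ) ≤ (5/4:ℝ)^(2*n+1) := by
    calc (3:ℝ) ≤ (5/4:ℝ)^5 := by norm_num
      _ ≤ (5/4:ℝ)^(2*n+1) := pow_le_pow_right₀ (by norm_num) (by omega)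
  have h7 : (0:ℝ) < ((n:ℝ)+1/4)^(2*n) := by positivity
  have h6 : ((n:ℝ)+1/4)^(2*n+1) = ((n:ℝ)+1/4) * ((n:ℝ)+1/4)^(2*n) := by
    rw [pow_succ]; ring
  have h8 : 3 * ((n:ℝ)+1/4)^(2*n+1) ≤ (5/4:ℝ)^(2*n+1) * ((n:ℝ)+1/4)^(2*n+1) :=
    mul_le_mul_of_nonneg_right h5 (by positivity)
  have h9 : (2*(n:ℝ)+1) * ((n:ℝ)+1/4) ^ (2*n) < 3 * ((n:ℝ)+1/4)^(2*n+1) := by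
    rw [h6]
    nlinarith
  linarith

lemma lem_caseA (n : ℕ) (hn : 2 ≤ n) (a r s : ℝ) (ha : 0 < a)
    (haeq : a ^ (2*n+1) * (a + n) = 1) (hr : a < r) (hs : r ^ (2*n+1) * s = 1)
    (hs2 : 1/2 ≤ s) :
    r ^ n * (2*s+1) < a ^ n * (2*(a+(n:ℝ))+1) := by
  have hr0 : 0 < r := lt_trans ha hr
  set x := r / a with hxdef
  have hx : 1 < x := (one_lt_div ha).mpr hr
  have hx0 : (0:ℝ) < x := lt_trans one_pos hx
  set c := 2*(a+(n:ℝ)) with hcdef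
  have hax : a * x = r := by rw [hxdef, mul_div_assoc', mul_div_cancel_left₀ r ha.ne']
  have key0 : a ^ (2*n+1) * (x ^ (2*n+1) * (2*s)) = a ^ (2*n+1) * c := by
    calc a^(2*n+1) * (x^(2*n+1)*(2*s)) = (a*x)^(2*n+1) * (2*s) := by rw [mul_pow]; ring
      _ = 2 * (r^(2*n+1) * s) := by rw [hax]; ring
      _ = 2 := by rw [hs]; ring
      _ = 2 * (a^(2*n+1)*(a+(n:ℝ))) := by rw [haeq]; ring
      _ = a^(2*n+1) * c := by rw [hcdef]; ring
  have hxc_eq : x ^ (2*n+1) * (2*s) = c :=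
    mul_left_cancel₀ (pow_ne_zero _ (ne_of_gt ha)) key0
  have hxc : x ^ (2*n+1) ≤ c := by
    nlinarith [pow_pos hx0 (2*n+1)]
  have key := lem_key n hn x c hx hxc
  have main : x ^ n * (2*s+1) < c + 1 := by
    have hxx : x ^ n * x ^ (n+1) = x ^ (2*n+1) := by rw [← pow_add]; congr 1; omega
    have h : (x ^ n * (2*s+1)) * x ^ (n+1) < (c+1) * x ^ (n+1) := by
      calc (x ^ n * (2*s+1)) * x ^ (n+1) = x^(2*n+1)*(2*s) + x^(2*n+1) := by
            rw [← hxx]; ring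
        _ = c + x^(2*n+1) := by rw [hxc_eq]
        _ < (c+1) * x ^ (n+1) := key
    exact lt_of_mul_lt_mul_right h (by positivity)
  have hrn : r ^ n = a ^ n * x ^ n := by rw [← hax, mul_pow]
  rw [hrn, hcdef] at *
  calc a ^ n * x ^ n * (2*s+1) = a^n * (x^n * (2*s+1)) := by ring
    _ < a^n * (2*(a+(n:ℝ))+1) := by
        apply mul_lt_mul_of_pos_left _ (by positivity)
        exact main


set_option maxHeartbeats 1000000 in
/-- With `n ≥ 2`, `a₊ ∈ (0,1)` and `a₋ ∈ (−n−1,−n)` the real roots of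
`t^(2n+2) + n·t^(2n+1) = 1`, and `g(t) = (n+1)tⁿ + t^(n+1) + t^(−(n+1))`: every complex root
`α ∉ {a₊, a₋}` satisfies `|g(α)| < g(a₊)`; moreover `g(a₊) < 2n+3`. -/
theorem stmt_6 (n : ℕ) (hn : 2 ≤ n)
    (ap : ℝ) (hap : ap ∈ Set.Ioo (0 : ℝ) 1)
    (hapr : ap ^ (2 * n + 2) + (n : ℝ) * ap ^ (2 * n + 1) = 1)
    (am : ℝ) (ham : am ∈ Set.Ioo (-(n : ℝ) - 1) (-(n : ℝ)))
    (hamr : am ^ (2 * n + 2) + (n : ℝ) * am ^ (2 * n + 1) = 1) :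
    (∀ α : ℂ, α ^ (2 * n + 2) + (n : ℂ) * α ^ (2 * n + 1) = 1 →
      α ≠ (ap : ℂ) → α ≠ (am : ℂ) →
      ‖((n : ℂ) + 1) * α ^ n + α ^ (n + 1) + α ^ (-((n : ℤ) + 1))‖ <
        ((n : ℝ) + 1) * ap ^ n + ap ^ (n + 1) + ap ^ (-((n : ℤ) + 1))) ∧
    ((n : ℝ) + 1) * ap ^ n + ap ^ (n + 1) + ap ^ (-((n : ℤ) + 1)) < 2 * n + 3 := by
  obtain ⟨hap0, hap1⟩ := hap
  obtain ⟨ham0, ham1⟩ := ham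
  have hn2 : (2:ℝ) ≤ (n:ℝ) := by exact_mod_cast hn
  have hapr' : ap ^ (2*n+1) * (ap + (n:ℝ)) = 1 := by linear_combination hapr
  have hamr' : am ^ (2*n+1) * (am + (n:ℝ)) = 1 := by linear_combination hamr
  -- representation of g(ap)
  have hexp : -((n:ℤ)+1) = -(((n+1 : ℕ)):ℤ) := by push_cast; ring
  have repR : ((n:ℝ)+1) * ap^n + ap^(n+1) + ap^(-((n:ℤ)+1)) = ap^n * (2*(ap+(n:ℝ))+1) := by
    have hzp : ap ^ (-((n:ℤ)+1)) = (ap^(n+1))⁻¹ := by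
      rw [hexp, zpow_neg, zpow_natCast]
    have hinv : (ap^(n+1))⁻¹ = ap^n * (ap+(n:ℝ)) := by
      apply inv_eq_of_mul_eq_one_right
      linear_combination hapr'
    rw [hzp, hinv]; ring
  constructor
  · intro α hαroot hne_p hne_m
    have hα' : α^(2*n+1) * (α + (n:ℂ)) = 1 := by linear_combination hαroot
    have hα0 : α ≠ 0 := by
      intro h
      rw [h, zero_pow (by omega : 2*n+1 ≠ 0), zero_mul] at hα'
      exact zero_ne_one hα'
    have repC : ((n:ℂ)+1) * α^n + α^(n+1) + α^(-((n:ℤ)+1)) = α^n * (2*α + 2*(n:ℂ) + 1) := by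
      have hzp : α ^ (-((n:ℤ)+1)) = (α^(n+1))⁻¹ := by
        rw [hexp, zpow_neg, zpow_natCast]
      have hinv : (α^(n+1))⁻¹ = α^n * (α+(n:ℂ)) := by
        apply inv_eq_of_mul_eq_one_right
        linear_combination hα'
      rw [hzp, hinv]; ring
    set r := ‖α‖ with hrdef
    set s := ‖α + (n:ℂ)‖ with hsdef
    have r0 : 0 < r := norm_pos_iff.mpr hα0
    have habs : r^(2*n+1) * s = 1 := by
      have h := congrArg (‖·‖) hα'
      simpa [norm_mul, norm_pow] using h
    have s0 : 0 < s := by nlinarith [pow_pos r0 (2*n+1), norm_nonneg (α + (n:ℂ))]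
    have habs2 : ‖2*α + 2*(n:ℂ) + 1‖ ≤ 2*s + 1 := by
      have heq : 2*α + 2*(n:ℂ) + 1 = 2*(α + (n:ℂ)) + 1 := by ring
      rw [heq]
      calc ‖2*(α + (n:ℂ)) + 1‖ ≤ ‖2*(α + (n:ℂ))‖ + ‖(1:ℂ)‖ :=
            norm_add_le _ _
        _ = 2*s + 1 := by rw [norm_mul, norm_one]; simp [hsdef]
    rw [repC, repR, norm_mul, norm_pow]
    rw [← hrdef]
    by_cases hcase : 1/2 ≤ s
    · -- Case A
      have hge : ap ≤ r := by
        by_contra h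
        push_neg at h
        have hsle : s ≤ r + (n:ℝ) := by
          calc s ≤ ‖α‖ + ‖(n:ℂ)‖ := norm_add_le _ _
            _ = r + (n:ℝ) := by rw [← hrdef, Complex.norm_natCast]
        have e2 : (1:ℝ) ≤ r^(2*n+1) * (r + n) := by
          nlinarith [pow_pos r0 (2*n+1)]
        have hpow : r^(2*n+1) < ap^(2*n+1) := pow_lt_pow_left₀ h r0.le (by omega)
        nlinarith [pow_pos r0 (2*n+1)]
      rcases eq_or_lt_of_le hge with heq | hlt
      · exfalso
        apply hne_p
        have h1 : r^(2*n+1)*(r+(n:ℝ)) = 1 := by rw [← heq]; exact hapr'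
        have hs_eq : s = r + (n:ℝ) := by
          have := habs.trans h1.symm
          exact mul_left_cancel₀ (pow_ne_zero _ (ne_of_gt r0)) this
        have hsq : s^2 = (α.re + (n:ℝ))^2 + α.im^2 := by
          rw [hsdef, Complex.sq_norm, Complex.normSq_apply]
          simp [Complex.add_re, Complex.add_im]
          ring
        have hrq : r^2 = α.re^2 + α.im^2 := by
          rw [hrdef, Complex.sq_norm, Complex.normSq_apply]; ring
        rw [hs_eq] at hsq
        have e2 : 2*(n:ℝ)*r = 2*(n:ℝ)*α.re := by linear_combination hsq - hrq
        have hre : r = α.re := mul_left_cancel₀ (by positivity : (2*(n:ℝ)) ≠ 0) e2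
        have hresq : α.re^2 = r^2 := by rw [hre]
        have himsq : α.im^2 = 0 := by linarith
        have him : α.im = 0 := by
          have := sq_eq_zero_iff.mp himsq
          exact this
        have : α = ((r:ℝ) : ℂ) := Complex.ext (by simp [← hre]) (by simp [him])
        rw [this, ← heq]
      · have final := lem_caseA n hn ap r s hap0 hapr' hlt habs hcase
        calc r ^ n * ‖2*α + 2*(n:ℂ) + 1‖ ≤ r^n * (2*s+1) :=
              mul_le_mul_of_nonneg_left habs2 (by positivity)
          _ < ap^n * (2*(ap+(n:ℝ))+1) := final
    · -- Case B : contradiction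
      exfalso
      push_neg at hcase
      have htri : (n:ℝ) ≤ s + r := by
        have h := norm_sub_le (α + (n:ℂ)) α
        simp only [add_sub_cancel_left] at h
        rw [Complex.norm_natCast] at h
        simpa [← hsdef, ← hrdef] using h
      have hr32 : (3/2:ℝ) ≤ r := by linarith
      have hr4 : (4:ℝ) ≤ r^(2*n+1) := by
        calc (4:ℝ) ≤ (3/2:ℝ)^5 := by norm_num
          _ ≤ (3/2:ℝ)^(2*n+1) := pow_le_pow_right₀ (by norm_num) (by omega)
          _ ≤ r^(2*n+1) := pow_le_pow_left₀ (by norm_num) hr32 _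
      have hs14 : s ≤ 1/4 := by nlinarith [mul_le_mul_of_nonneg_right hr4 s0.le]
      have hrlb : (n:ℝ) - 1/4 ≤ r := by linarith
      have hrub : r ≤ (n:ℝ) + 1/4 := by
        have h := norm_sub_le (α + (n:ℂ)) ((n:ℂ))
        simp only [add_sub_cancel_right] at h
        rw [Complex.norm_natCast] at h
        have h' : r ≤ s + (n:ℝ) := by
          simpa [← hsdef, ← hrdef] using h
        linarith
      -- bounds on b = -am
      set b := -am with hbdef
      have hbn : (n:ℝ) < b := by rw [hbdef]; linarith
      have hb : b^(2*n+1) * (b - (n:ℝ)) = 1 := by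
        have hodd : Odd (2*n+1) := ⟨n, by ring⟩
        rw [hbdef, hodd.neg_pow]
        linear_combination hamr'
      have hb4 : (4:ℝ) ≤ b^(2*n+1) := by
        calc (4:ℝ) ≤ (2:ℝ)^5 := by norm_num
          _ ≤ (2:ℝ)^(2*n+1) := pow_le_pow_right₀ (by norm_num) (by omega)
          _ ≤ b^(2*n+1) := pow_le_pow_left₀ (by norm_num) (by linarith) _
      have hbub : b ≤ (n:ℝ) + 1/4 := by
        nlinarith [mul_le_mul_of_nonneg_right hb4 (by linarith : (0:ℝ) ≤ b - n)]
      -- complex identity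
      set A : ℂ := (am : ℂ) with hAdef
      have hA : A^(2*n+1) * (A + (n:ℂ)) = 1 := by
        have h : ((am^(2*n+1) * (am + (n:ℝ)) : ℝ) : ℂ) = 1 := by rw [hamr']; norm_num
        push_cast at h
        exact h
      have hident : (α - A) * (α*A)^(2*n+1) = A^(2*n+1) - α^(2*n+1) := by
        linear_combination A^(2*n+1) * hα' - α^(2*n+1) * hA
      have hgeom : A^(2*n+1) - α^(2*n+1) =
          (∑ i ∈ Finset.range (2*n+1), A^i * α^(2*n+1-1-i)) * (A - α) :=
        (geom_sum₂_mul A α (2*n+1)).symm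
      have hRb : ‖A‖ = b := by
        rw [hAdef, Complex.norm_real, Real.norm_eq_abs, abs_of_neg (by linarith : am < 0), hbdef]
      have hsum_le : ‖∑ i ∈ Finset.range (2*n+1), A^i * α^(2*n+1-1-i)‖ ≤
          (2*(n:ℝ)+1) * ((n:ℝ)+1/4)^(2*n) := by
        calc ‖∑ i ∈ Finset.range (2*n+1), A^i * α^(2*n+1-1-i)‖ ≤
            ∑ i ∈ Finset.range (2*n+1), ‖A^i * α^(2*n+1-1-i)‖ :=
              norm_sum_le _ _
          _ ≤ ∑ i ∈ Finset.range (2*n+1), ((n:ℝ)+1/4)^(2*n) := by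
              apply Finset.sum_le_sum
              intro i hi
              simp only [Finset.mem_range] at hi
              rw [norm_mul, norm_pow, norm_pow, hRb, ← hrdef]
              have h1 : b^i ≤ ((n:ℝ)+1/4)^i := pow_le_pow_left₀ (by linarith) hbub i
              have h2 : r^(2*n+1-1-i) ≤ ((n:ℝ)+1/4)^(2*n+1-1-i) :=
                pow_le_pow_left₀ r0.le hrub _
              calc b^i * r^(2*n+1-1-i) ≤ ((n:ℝ)+1/4)^i * ((n:ℝ)+1/4)^(2*n+1-1-i) := by
                    apply mul_le_mul h1 h2 (by positivity) (by positivity)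
                _ = ((n:ℝ)+1/4)^(2*n) := by rw [← pow_add]; congr 1; omega
          _ = (2*(n:ℝ)+1) * ((n:ℝ)+1/4)^(2*n) := by
              rw [Finset.sum_const, Finset.card_range, nsmul_eq_mul]; push_cast; ring
      have hne : α - A ≠ 0 := sub_ne_zero.mpr hne_m
      have hposd : 0 < ‖α - A‖ := norm_pos_iff.mpr hne
      have hEq : ‖α - A‖ * (r * b)^(2*n+1) =
          ‖∑ i ∈ Finset.range (2*n+1), A^i * α^(2*n+1-1-i)‖ *
            ‖α - A‖ := by
        have h := congrArg (‖·‖) (hident.trans hgeom)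
        rw [norm_mul, norm_mul, norm_pow, norm_mul, hRb, ← hrdef] at h
        rw [h, norm_sub_rev]
      have hcancel : (r * b)^(2*n+1) ≤ (2*(n:ℝ)+1) * ((n:ℝ)+1/4)^(2*n) := by
        have h2 : ‖α - A‖ * (r*b)^(2*n+1) ≤
            ‖α - A‖ * ((2*(n:ℝ)+1) * ((n:ℝ)+1/4)^(2*n)) := by
          rw [hEq, mul_comm]
          exact mul_le_mul_of_nonneg_left hsum_le hposd.le
        exact le_of_mul_le_mul_left h2 hposd
      have hlb : (((n:ℝ)-1/4) * (n:ℝ))^(2*n+1) ≤ (r * b)^(2*n+1) := by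
        apply pow_le_pow_left₀ (by nlinarith) _ _
        apply mul_le_mul hrlb hbn.le (by linarith) r0.le
      have := lem_B n hn
      linarith
  · -- g(ap) < 2n+3
    rw [repR]
    have hpow : ap^n ≤ 1 := pow_le_one₀ hap0.le hap1.le
    have h1 : ap^n * (2*(ap+(n:ℝ))+1) ≤ 2*(ap+(n:ℝ))+1 :=
      mul_le_of_le_one_left (by positivity) hpow
    linarith
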